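/- arXiv:2205.03973 — 2 statements merged into one kernel-verified Lean document; each statement's English description precedes it below -/
import Mathlib

section
/- Let n ≥ 3 and k ≥ 1 be integers. In the quotient ring R_{n,k} = ℤ[X_1,…,X_n]/(X_1^{k+1},…,X_n^{k+1}), with A_i the image of X_i, the element ξ_{(n,k)} := [(∏_{i=2}^{n} (A_1 − A_i)) · (A_2 − A_3)]^k equals (−1)^{(n−1)k} · λ_{(3,k)} · A_1^k A_2^k ⋯ A_n^k, where λ_{(3,k)} = Σ_{i=0}^{k} (−1)^i (binom(k,i))^3. -/
open MvPolynomial Finset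

lemma sub_pow_expand {σ : Type*} [DecidableEq σ] (x y : σ) (k : ℕ) :
    (X x - X y : MvPolynomial σ ℤ) ^ k
      = ∑ t ∈ range (k+1), monomial (Finsupp.single x t + Finsupp.single y (k - t))
          ((-1) ^ (k - t) * (k.choose t : ℤ)) := by
  rw [sub_eq_add_neg, add_pow]
  refine Finset.sum_congr rfl fun t ht => ?_
  have h1 : (-1 : MvPolynomial σ ℤ) = C (-1) := by simp
  have h2 : ((k.choose t : ℕ) : MvPolynomial σ ℤ) = C ((k.choose t : ℕ) : ℤ) := rfl
  rw [neg_pow, h1, ← C_pow, h2, X_pow_eq_monomial, X_pow_eq_monomial]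
  simp only [mul_assoc, ← C_mul]
  rw [mul_comm ((monomial (Finsupp.single y (k-t))) 1) (C _), C_mul_monomial, C_mul_monomial,
    monomial_mul]
  simp [mul_comm]

lemma mem_span_of_support {n k : ℕ} (p : MvPolynomial (Fin n) ℤ)
    (h : ∀ m ∈ p.support, ∃ i, k + 1 ≤ m i) :
    p ∈ Ideal.span (Set.range fun i : Fin n => (X i : MvPolynomial (Fin n) ℤ) ^ (k + 1)) := by
  rw [← p.support_sum_monomial_coeff]
  refine Ideal.sum_mem _ fun m hm => ?_
  obtain ⟨i, hi⟩ := h m hm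
  have hle : Finsupp.single i (k+1) ≤ m := by
    rw [Finsupp.single_le_iff]; exact hi
  have : (monomial m (coeff m p) : MvPolynomial (Fin n) ℤ)
      = X i ^ (k+1) * monomial (m - Finsupp.single i (k+1)) (coeff m p) := by
    rw [X_pow_eq_monomial, monomial_mul, one_mul, add_tsub_cancel_of_le hle]
  rw [this]
  exact Ideal.mul_mem_right _ _ (Ideal.subset_span ⟨i, rfl⟩)

lemma coeff_sub_pow_mul {σ : Type*} [DecidableEq σ] {k : ℕ} (j i : σ) (hij : j ≠ i)
    (q : MvPolynomial σ ℤ) (hq : ∀ b ∈ q.support, b i = 0)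
    (m : σ →₀ ℕ) (hm : m i = k) :
    coeff m ((X j - X i) ^ k * q) = (-1) ^ k * coeff (m - Finsupp.single i k) q := by
  rw [sub_pow_expand, Finset.sum_mul, coeff_sum]
  rw [Finset.sum_eq_single 0]
  · rw [coeff_monomial_mul']
    have hle : Finsupp.single j 0 + Finsupp.single i (k - 0) ≤ m := by
      simp only [Finsupp.single_zero, Nat.sub_zero, zero_add, Finsupp.single_le_iff]
      omega
    rw [if_pos hle]
    simp
  · intro t ht htne
    rw [coeff_monomial_mul']
    split_ifs with hle
    · have hdi : (Finsupp.single j t + Finsupp.single i (k - t)) i = k - t := by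
        simp [Finsupp.single_apply, hij]
      have : (m - (Finsupp.single j t + Finsupp.single i (k - t))) i = t := by
        rw [Finsupp.tsub_apply, hdi, hm]
        have := Finset.mem_range.mp ht
        omega
      have hz : coeff (m - (Finsupp.single j t + Finsupp.single i (k - t))) q = 0 := by
        by_contra hc
        exact htne (this ▸ (hq _ (mem_support_iff.mpr hc)) ▸ this.symm ▸ rfl)
      rw [hz, mul_zero]
    · rfl
  · intro h
    exact absurd (Finset.mem_range.mpr (by omega)) h

lemma coeff_peel {σ : Type*} [Fintype σ] [DecidableEq σ] {k : ℕ} (z : σ)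
    (Q : MvPolynomial σ ℤ) (S : Finset σ) (hzS : z ∉ S) (hQv : ∀ i ∈ S, i ∉ Q.vars) :
    ∀ m : σ →₀ ℕ, (∀ i ∈ S, m i = k) →
    coeff m (Q * ∏ i ∈ S, (X z - X i) ^ k)
      = ((-1 : ℤ) ^ k) ^ S.card * coeff (m - ∑ i ∈ S, Finsupp.single i k) Q := by
  classical
  induction S using Finset.induction_on with
  | empty => simp
  | @insert a S haS ih =>
    intro m hm
    have hza : z ≠ a := fun h => hzS (h ▸ Finset.mem_insert_self a S)
    have hzS' : z ∉ S := fun h => hzS (Finset.mem_insert_of_mem h)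
    have hQv' : ∀ i ∈ S, i ∉ Q.vars := fun i hi => hQv i (Finset.mem_insert_of_mem hi)
    rw [Finset.prod_insert haS, mul_left_comm]
    have hsupp : ∀ b ∈ (Q * ∏ i ∈ S, (X z - X i) ^ k).support, b a = 0 := by
      intro b hb
      by_contra hba
      have hav : a ∈ (Q * ∏ i ∈ S, (X z - X i) ^ k).vars :=
        (mem_vars a).mpr ⟨b, hb, Finsupp.mem_support_iff.mpr hba⟩
      have h1 := vars_mul Q (∏ i ∈ S, (X z - X i) ^ k) hav
      rcases Finset.mem_union.mp h1 with h | h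
      · exact hQv a (Finset.mem_insert_self a S) h
      · have h2 := vars_prod (s := S) (fun i => (X z - X i) ^ k) h
        obtain ⟨i, hiS, hvi⟩ := Finset.mem_biUnion.mp h2
        have h3 : a ∈ ((X z - X i : MvPolynomial σ ℤ)).vars := vars_pow _ _ hvi
        have h4 := vars_sub_subset (p := X z) (q := X i) h3
        simp only [vars_X, Finset.mem_union, Finset.mem_singleton] at h4
        rcases h4 with rfl | rfl
        · exact hza rfl
        · exact haS hiS
    rw [coeff_sub_pow_mul z a hza _ hsupp m (hm a (Finset.mem_insert_self a S))]
    rw [ih hzS' hQv' _ (fun i hi => by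
      rw [Finsupp.tsub_apply, Finsupp.single_apply, if_neg (fun h => haS (by rwa [h]))]
      simpa using hm i (Finset.mem_insert_of_mem hi))]
    rw [Finset.card_insert_of_notMem haS, Finset.sum_insert haS, pow_succ]
    ring_nf
    rw [tsub_tsub, add_comm (Finsupp.single a k) _]

lemma coeff_triple {σ : Type*} [DecidableEq σ] (k : ℕ) (x y z : σ)
    (hxy : x ≠ y) (hxz : x ≠ z) (hyz : y ≠ z) :
    coeff (Finsupp.single x k + Finsupp.single y k + Finsupp.single z k)
      (((X x - X y) ^ k * ((X x - X z) ^ k * (X y - X z) ^ k)) : MvPolynomial σ ℤ)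
      = ∑ a ∈ range (k+1), (-1 : ℤ) ^ a * (k.choose a : ℤ) ^ 3 := by
  have hyx := Ne.symm hxy
  have hzx := Ne.symm hxz
  have hzy := Ne.symm hyz
  set m : σ →₀ ℕ := Finsupp.single x k + Finsupp.single y k + Finsupp.single z k with hm
  have hmx : m x = k := by simp [hm, Finsupp.single_apply, hxy, hxz, hyz, hyx, hzx, hzy]
  have hmy : m y = k := by simp [hm, Finsupp.single_apply, hxy, hxz, hyz, hyx, hzx, hzy]
  have hmz : m z = k := by simp [hm, Finsupp.single_apply, hxy, hxz, hyz, hyx, hzx, hzy]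
  have happ : ∀ s b c : ℕ,
      ((Finsupp.single x s + Finsupp.single y (k - s)) +
        ((Finsupp.single x b + Finsupp.single z (k - b)) +
          (Finsupp.single y c + Finsupp.single z (k - c)))) = m ↔
        (s + b = k ∧ (k - s) + c = k ∧ (k - b) + (k - c) = k) := by
    intro s b c
    constructor
    · intro h
      refine ⟨?_, ?_, ?_⟩
      · have := DFunLike.congr_fun h x
        simpa [Finsupp.single_apply, hxy, hxz, hyz, hyx, hzx, hzy, hmx] using this
      · have := DFunLike.congr_fun h y
        simpa [Finsupp.single_apply, hxy, hxz, hyz, hyx, hzx, hzy, hmy] using this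
      · have := DFunLike.congr_fun h z
        simpa [Finsupp.single_apply, hxy, hxz, hyz, hyx, hzx, hzy, hmz] using this
    · rintro ⟨h1, h2, h3⟩
      ext w
      simp only [hm, Finsupp.add_apply, Finsupp.single_apply]
      by_cases e1 : x = w <;> by_cases e2 : y = w <;> by_cases e3 : z = w <;>
        first
          | exact absurd (e1.trans e2.symm) hxy
          | exact absurd (e1.trans e3.symm) hxz
          | exact absurd (e2.trans e3.symm) hyz
          | (simp [e1, e2, e3]; omega)
          | simp [e1, e2, e3]
  rw [sub_pow_expand x y, sub_pow_expand x z, sub_pow_expand y z]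
  simp only [Finset.sum_mul, Finset.mul_sum, coeff_sum, monomial_mul, coeff_monomial]
  refine Finset.sum_congr rfl fun a ha => ?_
  have hak : a ≤ k := Nat.lt_succ_iff.mp (Finset.mem_range.mp ha)
  rw [Finset.sum_eq_single (k - a)]
  · rw [Finset.sum_eq_single a]
    · rw [if_pos ((happ a (k - a) a).mpr (by omega))]
      rw [Nat.sub_sub_self hak, Nat.choose_symm hak]
      set K := (k.choose a : ℤ)
      have h1 : ((-1:ℤ)^(k-a))^2 = 1 := by
        rw [← pow_mul, mul_comm, pow_mul, neg_one_sq, one_pow]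
      calc ((-1:ℤ)^(k-a) * K) * ((-1:ℤ)^a * K * ((-1:ℤ)^(k-a) * K))
          = ((-1:ℤ)^(k-a))^2 * ((-1)^a * K^3) := by ring
        _ = (-1)^a * K^3 := by rw [h1, one_mul]
    · intro s hs hsa
      rw [if_neg (fun h => hsa (by have := (happ s (k-a) a).mp h
                                   have hsk := Nat.lt_succ_iff.mp (Finset.mem_range.mp hs)
                                   omega))]
    · intro h; exact absurd (Finset.mem_range.mpr (by omega)) h
  · intro b hb hbne
    refine Finset.sum_eq_zero fun s hs => ?_
    rw [if_neg (fun h => hbne (by have := (happ s b a).mp h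
                                  have hsk := Nat.lt_succ_iff.mp (Finset.mem_range.mp hs)
                                  have hbk := Nat.lt_succ_iff.mp (Finset.mem_range.mp hb)
                                  omega))]
  · intro h; exact absurd (Finset.mem_range.mpr (by omega)) h

/-- In `ℤ[X_1,…,X_n]/(X_1^{k+1},…,X_n^{k+1})` (indices `0,…,n-1` here), the element
`ξ_{(n,k)} = [(∏_{i=2}^{n} (A_1 − A_i)) · (A_2 − A_3)]^k` equals
`(−1)^{(n−1)k} · λ_{(3,k)} · A_1^k ⋯ A_n^k`, where
`λ_{(3,k)} = Σ_{i=0}^{k} (−1)^i (binom(k,i))^3`. -/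
theorem xi_eq_sign_lambda_top (n k : ℕ) (hn : 3 ≤ n) (hk : 1 ≤ k)
    (I : Ideal (MvPolynomial (Fin n) ℤ))
    (hI : I = Ideal.span (Set.range fun i : Fin n => (X i : MvPolynomial (Fin n) ℤ) ^ (k + 1)))
    (A : Fin n → MvPolynomial (Fin n) ℤ ⧸ I)
    (hA : ∀ i, A i = Ideal.Quotient.mk I (X i)) :
    ((∏ i ∈ univ.erase ⟨0, by omega⟩, (A ⟨0, by omega⟩ - A i)) *
        (A ⟨1, by omega⟩ - A ⟨2, by omega⟩)) ^ k =
      (-1 : MvPolynomial (Fin n) ℤ ⧸ I) ^ ((n - 1) * k) *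
        (↑(∑ i ∈ Finset.range (k + 1), (-1 : ℤ) ^ i * (Nat.choose k i : ℤ) ^ 3) :
          MvPolynomial (Fin n) ℤ ⧸ I) *
        ∏ i : Fin n, A i ^ k := by
  classical
  set z0 : Fin n := ⟨0, by omega⟩ with hz0
  set z1 : Fin n := ⟨1, by omega⟩ with hz1
  set z2 : Fin n := ⟨2, by omega⟩ with hz2
  have hz01 : z0 ≠ z1 := Fin.ne_of_val_ne (by simp)
  have hz02 : z0 ≠ z2 := Fin.ne_of_val_ne (by simp)
  have hz12 : z1 ≠ z2 := Fin.ne_of_val_ne (by simp [hz1, hz2])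
  set lam : ℤ := ∑ i ∈ Finset.range (k + 1), (-1 : ℤ) ^ i * (Nat.choose k i : ℤ) ^ 3 with hlam
  set B : MvPolynomial (Fin n) ℤ :=
    (∏ i ∈ univ.erase z0, (X z0 - X i)) * (X z1 - X z2) with hB
  set G : MvPolynomial (Fin n) ℤ :=
    C ((-1 : ℤ) ^ ((n - 1) * k) * lam) * ∏ i : Fin n, X i ^ k with hG
  -- reduce to polynomial level
  have hmk : ∀ p : MvPolynomial (Fin n) ℤ, Ideal.Quotient.mk I p = Ideal.Quotient.mk I p := fun _ => rfl
  have hLHS : ((∏ i ∈ univ.erase z0, (A z0 - A i)) * (A z1 - A z2)) ^ k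
      = Ideal.Quotient.mk I (B ^ k) := by
    simp only [hA, hB, map_pow, map_mul, map_prod, map_sub]
  have hRHS : (-1 : MvPolynomial (Fin n) ℤ ⧸ I) ^ ((n - 1) * k) *
        (lam : MvPolynomial (Fin n) ℤ ⧸ I) * ∏ i : Fin n, A i ^ k
      = Ideal.Quotient.mk I G := by
    have h1 : (C (-1 : ℤ) : MvPolynomial (Fin n) ℤ) = -1 := by simp
    have h2 : (C lam : MvPolynomial (Fin n) ℤ) = (lam : MvPolynomial (Fin n) ℤ) := by
      rw [← map_intCast (C : ℤ →+* MvPolynomial (Fin n) ℤ) lam, Int.cast_id]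
    simp only [hA, hG, map_mul, map_prod, map_pow, C_mul, h1, h2, map_neg, map_one, map_intCast]
  rw [hLHS, hRHS]
  -- homogeneity
  have hcard : (univ.erase z0).card = n - 1 := by
    rw [Finset.card_erase_of_mem (mem_univ _), Finset.card_univ, Fintype.card_fin]
  have hBhom : B.IsHomogeneous n := by
    have h1 : (∏ i ∈ univ.erase z0, (X z0 - X i : MvPolynomial (Fin n) ℤ)).IsHomogeneous (n-1) := by
      have h := IsHomogeneous.prod (univ.erase z0)
        (fun i => (X z0 - X i : MvPolynomial (Fin n) ℤ))
        (fun _ => 1) (fun i _ => (isHomogeneous_X _ _).sub (isHomogeneous_X _ _))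
      simpa [hcard] using h
    have h2 := h1.mul ((isHomogeneous_X _ z1).sub (isHomogeneous_X _ z2))
    have h3 : n - 1 + 1 = n := by omega
    rw [h3] at h2; exact h2
  have hBk : (B^k).IsHomogeneous (n*k) := hBhom.pow k
  have hprodhom : (∏ i : Fin n, (X i : MvPolynomial (Fin n) ℤ) ^ k).IsHomogeneous (n*k) := by
    have h := IsHomogeneous.prod univ (fun i => (X i : MvPolynomial (Fin n) ℤ)^k) (fun _ => k)
      (fun i _ => isHomogeneous_X_pow _ _)
    simpa [Finset.sum_const, Finset.card_univ, mul_comm] using h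
  have hGhom : G.IsHomogeneous (n*k) := hprodhom.C_mul _
  -- the top monomial
  set m0 : Fin n →₀ ℕ := ∑ i : Fin n, Finsupp.single i k with hm0def
  have hm0 : ∀ j, m0 j = k := by
    intro j
    rw [hm0def, Finsupp.finset_sum_apply]
    simp [Finsupp.single_apply]
  have hmono : (∏ i : Fin n, (X i : MvPolynomial (Fin n) ℤ) ^ k) = monomial m0 1 := by
    rw [← prod_X_pow_eq_monomial]
    have hsupp : m0.support = univ := by
      ext j
      simp only [Finsupp.mem_support_iff, hm0, Finset.mem_univ, iff_true]
      omega
    rw [hsupp]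
    exact Finset.prod_congr rfl fun j _ => by rw [hm0]
  have hcoeffG : coeff m0 G = (-1:ℤ)^((n-1)*k) * lam := by
    rw [hG, hmono, coeff_C_mul, coeff_monomial, if_pos rfl, mul_one]
  -- split of the product
  set S : Finset (Fin n) := ((univ.erase z0).erase z1).erase z2 with hS
  have hz1mem : z1 ∈ univ.erase z0 := Finset.mem_erase.mpr ⟨Ne.symm hz01, mem_univ _⟩
  have hz2mem : z2 ∈ (univ.erase z0).erase z1 :=
    Finset.mem_erase.mpr ⟨Ne.symm hz12, Finset.mem_erase.mpr ⟨Ne.symm hz02, mem_univ _⟩⟩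
  have hprodsplit : (∏ i ∈ univ.erase z0, (X z0 - X i : MvPolynomial (Fin n) ℤ))
      = (X z0 - X z1) * ((X z0 - X z2) * ∏ i ∈ S, (X z0 - X i)) := by
    rw [← Finset.mul_prod_erase _ _ hz1mem, ← Finset.mul_prod_erase _ _ hz2mem]
  set Q3 : MvPolynomial (Fin n) ℤ :=
    (X z0 - X z1)^k * ((X z0 - X z2)^k * (X z1 - X z2)^k) with hQ3
  have hBsplit : B ^ k = Q3 * ∏ i ∈ S, (X z0 - X i)^k := by
    rw [hB, hprodsplit, hQ3]
    simp only [mul_pow, ← Finset.prod_pow]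
    ring
  have hmemS : ∀ i, i ∈ S → i ≠ z2 ∧ i ≠ z1 ∧ i ≠ z0 := by
    intro i hi
    simp only [hS, Finset.mem_erase, Finset.mem_univ, and_true] at hi
    exact ⟨hi.1, hi.2.1, hi.2.2⟩
  have hnotmemS : ∀ j, j ∉ S → j = z2 ∨ j = z1 ∨ j = z0 := by
    intro j hj
    simp only [hS, Finset.mem_erase, Finset.mem_univ, and_true, not_and, not_not] at hj
    by_cases h2 : j = z2
    · exact Or.inl h2
    · by_cases h1 : j = z1
      · exact Or.inr (Or.inl h1)
      · exact Or.inr (Or.inr (hj h2 h1))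
  have hz0S : z0 ∉ S := fun h => ((hmemS z0 h).2.2) rfl
  have hQ3vars : ∀ i ∈ S, i ∉ Q3.vars := by
    intro i hi hvi
    obtain ⟨h2, h1, h0⟩ := hmemS i hi
    have hv : ∀ a b : Fin n, i ∈ ((X a - X b : MvPolynomial (Fin n) ℤ)^k).vars → i = a ∨ i = b := by
      intro a b h
      have h3 := vars_pow _ _ h
      have h4 := vars_sub_subset (p := (X a : MvPolynomial (Fin n) ℤ)) (q := X b) h3
      simpa [vars_X] using h4
    rw [hQ3] at hvi
    rcases Finset.mem_union.mp (vars_mul _ _ hvi) with h | h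
    · rcases hv _ _ h with rfl | rfl
      · exact h0 rfl
      · exact h1 rfl
    · rcases Finset.mem_union.mp (vars_mul _ _ h) with h' | h'
      · rcases hv _ _ h' with rfl | rfl
        · exact h0 rfl
        · exact h2 rfl
      · rcases hv _ _ h' with rfl | rfl
        · exact h1 rfl
        · exact h2 rfl
  have hcardS : S.card = n - 3 := by
    rw [hS, Finset.card_erase_of_mem hz2mem, Finset.card_erase_of_mem hz1mem, hcard]
    omega
  set m3 : Fin n →₀ ℕ := Finsupp.single z0 k + Finsupp.single z1 k + Finsupp.single z2 k with hm3
  have hsub : m0 - ∑ i ∈ S, Finsupp.single i k = m3 := by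
    ext j
    have hSj : (∑ i ∈ S, Finsupp.single i k) j = if j ∈ S then k else 0 := by
      rw [Finsupp.finset_sum_apply]
      simp [Finsupp.single_apply]
    rw [Finsupp.tsub_apply, hm0 j, hSj, hm3]
    simp only [Finsupp.add_apply, Finsupp.single_apply]
    by_cases hjS : j ∈ S
    · obtain ⟨h2, h1, h0⟩ := hmemS j hjS
      rw [if_pos hjS, if_neg (Ne.symm h0), if_neg (Ne.symm h1), if_neg (Ne.symm h2)]
      omega
    · rw [if_neg hjS]
      rcases hnotmemS j hjS with rfl | rfl | rfl
      · rw [if_neg hz02, if_neg hz12, if_pos rfl]; omega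
      · rw [if_neg hz01, if_pos rfl, if_neg (Ne.symm hz12)]; omega
      · rw [if_pos rfl, if_neg (Ne.symm hz01), if_neg (Ne.symm hz02)]; omega
  have hcoeffB : coeff m0 (B ^ k) = ((-1:ℤ)^k)^(n-3) * lam := by
    rw [hBsplit, coeff_peel z0 Q3 S hz0S hQ3vars m0 (fun i _ => hm0 i), hcardS, hsub, hm3, hQ3,
      coeff_triple k z0 z1 z2 hz01 hz02 hz12, hlam]
  have hsign : ((-1:ℤ)^k)^(n-3) = (-1:ℤ)^((n-1)*k) := by
    rw [← pow_mul]
    have h3 : (n-1)*k = k*(n-3) + 2*k := by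
      rw [show n - 1 = (n-3) + 2 from by omega, add_mul, Nat.mul_comm (n-3) k]
    rw [h3, pow_add, pow_mul, pow_mul, neg_one_sq, one_pow, mul_one]
  have hcoeff0 : coeff m0 (B^k - G) = 0 := by
    rw [coeff_sub, hcoeffB, hcoeffG, hsign, sub_self]
  -- ideal membership
  rw [Ideal.Quotient.eq, hI]
  apply mem_span_of_support
  intro m hm
  by_contra hcon
  push_neg at hcon
  have hDhom := hBk.sub hGhom
  have hdeg : (Finsupp.weight 1) m = n * k := hDhom (mem_support_iff.mp hm)
  have hsum : ∑ i : Fin n, m i = n * k := by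
    have h1 : m.degree = n * k := by rw [Finsupp.degree_eq_weight_one]; exact hdeg
    rw [← h1, Finsupp.degree]
    exact (Finset.sum_subset (Finset.subset_univ _)
      (fun x _ hx => Finsupp.notMem_support_iff.mp hx)).symm
  have hall : ∀ i, m i = k := by
    by_contra hx
    push_neg at hx
    obtain ⟨j, hj⟩ := hx
    have hlt : m j < k := lt_of_le_of_ne (by have := hcon j; omega) hj
    have hlt2 : ∑ i : Fin n, m i < ∑ _i : Fin n, k :=
      Finset.sum_lt_sum (fun i _ => by have := hcon i; omega) ⟨j, mem_univ _, hlt⟩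
    rw [hsum] at hlt2
    simp only [Finset.sum_const, Finset.card_univ, Fintype.card_fin, smul_eq_mul] at hlt2
    omega
  have hmeq : m = m0 := Finsupp.ext fun j => by rw [hall j, hm0 j]
  rw [hmeq] at hm
  exact (mem_support_iff.mp hm) hcoeff0
end

section
/- Let k ≥ 1 be an integer. In the quotient ring ℤ[x,y,z]/(x^{k+1}, y^{k+1}, z^{k+1}), denoting by x̄, ȳ, z̄ the images of x, y, z, one has [(x̄ − ȳ)(x̄ − z̄)(ȳ − z̄)]^k = λ_{(3,k)} · x̄^k ȳ^k z̄^k, where λ_{(3,k)} = Σ_{i=0}^{k} (−1)^i (binom(k,i))^3. -/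
open MvPolynomial Finset

lemma xi_mono3 (a b c : ℕ) (r : ℤ) :
    (C r * X 0 ^ a * X 1 ^ b * X 2 ^ c : MvPolynomial (Fin 3) ℤ) =
      monomial (Finsupp.single 0 a + Finsupp.single 1 b + Finsupp.single 2 c) r := by
  rw [X_pow_eq_monomial, X_pow_eq_monomial, X_pow_eq_monomial, C_apply,
    monomial_mul, monomial_mul, monomial_mul]
  simp

lemma xi_fs_eq {a b c k : ℕ} :
    (Finsupp.single 0 a + Finsupp.single 1 b + Finsupp.single 2 c : Fin 3 →₀ ℕ) =
      Finsupp.single 0 k + Finsupp.single 1 k + Finsupp.single 2 k ↔ a = k ∧ b = k ∧ c = k := by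
  constructor
  · intro h
    exact ⟨by simpa [Finsupp.single_apply] using DFunLike.congr_fun h 0,
      by simpa [Finsupp.single_apply] using DFunLike.congr_fun h 1,
      by simpa [Finsupp.single_apply] using DFunLike.congr_fun h 2⟩
  · rintro ⟨rfl, rfl, rfl⟩; rfl

lemma xi_term_eq (k a b c : ℕ) :
    ((-1)^(a+k) * X 0^a * X 1^(k-a) * (k.choose a : MvPolynomial (Fin 3) ℤ)) *
    ((-1)^(b+k) * X 0^b * X 2^(k-b) * (k.choose b : MvPolynomial (Fin 3) ℤ)) *
    ((-1)^(c+k) * X 1^c * X 2^(k-c) * (k.choose c : MvPolynomial (Fin 3) ℤ))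
    = C ((-1)^(a+b+c+3*k) * (k.choose a * k.choose b * k.choose c : ℤ)) *
        X 0^(a+b) * X 1^((k-a)+c) * X 2^((k-b)+(k-c)) := by
  simp only [map_mul, map_pow, map_neg, map_one, map_natCast]
  ring

lemma xi_coeff_main (k : ℕ) :
    coeff (Finsupp.single 0 k + Finsupp.single 1 k + Finsupp.single 2 k)
      (((X 0 - X 1) * (X 0 - X 2) * (X 1 - X 2) : MvPolynomial (Fin 3) ℤ) ^ k)
    = ∑ i ∈ Finset.range (k + 1), (-1 : ℤ) ^ i * (k.choose i : ℤ) ^ 3 := by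
  rw [mul_pow, mul_pow, sub_pow, sub_pow, sub_pow]
  simp only [Finset.sum_mul, Finset.mul_sum]
  rw [coeff_sum]
  simp only [coeff_sum]
  refine Finset.sum_congr rfl fun a ha => ?_
  rw [Finset.mem_range] at ha
  have ha' : a ≤ k := by omega
  rw [Finset.sum_eq_single (k - a)]
  · rw [Finset.sum_eq_single a]
    · rw [xi_term_eq, xi_mono3, coeff_monomial, if_pos]
      · rw [Nat.choose_symm ha']
        have he : a + (k - a) + a + 3 * k = a + 2 * (2 * k) := by omega
        rw [he, pow_add, pow_mul]
        push_cast
        ring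
      · rw [xi_fs_eq]
        omega
    · intro x hx hxa
      rw [Finset.mem_range] at hx
      rw [xi_term_eq, xi_mono3, coeff_monomial, if_neg]
      rw [xi_fs_eq]
      omega
    · intro h
      exact absurd (Finset.mem_range.mpr (by omega)) h
  · intro b hb hba
    rw [Finset.mem_range] at hb
    refine Finset.sum_eq_zero fun x hx => ?_
    rw [Finset.mem_range] at hx
    rw [xi_term_eq, xi_mono3, coeff_monomial, if_neg]
    rw [xi_fs_eq]
    omega
  · intro h
    exact absurd (Finset.mem_range.mpr (by omega)) h

lemma xi_mem_span_of_support (k : ℕ) (p : MvPolynomial (Fin 3) ℤ)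
    (h : ∀ d ∈ p.support, ∃ i : Fin 3, k + 1 ≤ d i) :
    p ∈ Ideal.span (Set.range fun i : Fin 3 => (X i : MvPolynomial (Fin 3) ℤ) ^ (k + 1)) := by
  rw [← p.support_sum_monomial_coeff]
  refine Ideal.sum_mem _ fun d hd => ?_
  obtain ⟨i, hi⟩ := h d hd
  have hle : Finsupp.single i (k + 1) ≤ d := by
    rw [Finsupp.single_le_iff]; exact hi
  have : monomial d (coeff d p) =
      monomial (d - Finsupp.single i (k + 1)) (coeff d p) * (X i) ^ (k + 1) := by
    rw [X_pow_eq_monomial, monomial_mul, mul_one, tsub_add_cancel_of_le hle]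
  rw [this]
  exact Ideal.mul_mem_left _ _ (Ideal.subset_span ⟨i, rfl⟩)

lemma xi_deg_sum (d : Fin 3 →₀ ℕ) : (Finsupp.weight 1) d = d 0 + d 1 + d 2 := by
  rw [Finsupp.weight_apply, Finsupp.sum_fintype _ _ (fun i => by simp)]
  simp [Fin.sum_univ_three, add_assoc]

lemma xi_hom3 (k : ℕ) :
    (((X 0 - X 1) * (X 0 - X 2) * (X 1 - X 2) : MvPolynomial (Fin 3) ℤ) ^ k).IsHomogeneous
      (3 * k) := by
  have h1 : ((X 0 - X 1) * (X 0 - X 2) * (X 1 - X 2) : MvPolynomial (Fin 3) ℤ).IsHomogeneous 3 :=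
    (((isHomogeneous_X _ _).sub (isHomogeneous_X _ _)).mul
      ((isHomogeneous_X _ _).sub (isHomogeneous_X _ _))).mul
      ((isHomogeneous_X _ _).sub (isHomogeneous_X _ _))
  simpa using h1.pow k

/-- In `ℤ[x,y,z]/(x^{k+1}, y^{k+1}, z^{k+1})`, one has
`[(x̄ − ȳ)(x̄ − z̄)(ȳ − z̄)]^k = λ_{(3,k)} · x̄^k ȳ^k z̄^k`, where
`λ_{(3,k)} = Σ_{i=0}^{k} (−1)^i (binom(k,i))^3`. -/
theorem xi_three_eq_lambda_top (k : ℕ) (hk : 1 ≤ k)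
    (I : Ideal (MvPolynomial (Fin 3) ℤ))
    (hI : I = Ideal.span (Set.range fun i : Fin 3 => (X i : MvPolynomial (Fin 3) ℤ) ^ (k + 1)))
    (x y z : MvPolynomial (Fin 3) ℤ ⧸ I)
    (hx : x = Ideal.Quotient.mk I (X 0))
    (hy : y = Ideal.Quotient.mk I (X 1))
    (hz : z = Ideal.Quotient.mk I (X 2)) :
    ((x - y) * (x - z) * (y - z)) ^ k =
      (↑(∑ i ∈ Finset.range (k + 1), (-1 : ℤ) ^ i * (Nat.choose k i : ℤ) ^ 3) :
        MvPolynomial (Fin 3) ℤ ⧸ I) * (x ^ k * y ^ k * z ^ k) := by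
  subst hx hy hz
  set l : ℤ := ∑ i ∈ Finset.range (k + 1), (-1 : ℤ) ^ i * (Nat.choose k i : ℤ) ^ 3 with hl
  set P : MvPolynomial (Fin 3) ℤ := ((X 0 - X 1) * (X 0 - X 2) * (X 1 - X 2)) ^ k with hP
  set Q : MvPolynomial (Fin 3) ℤ := C l * (X 0 ^ k * X 1 ^ k * X 2 ^ k) with hQ
  set κ : Fin 3 →₀ ℕ := Finsupp.single 0 k + Finsupp.single 1 k + Finsupp.single 2 k with hκ
  have hQmono : Q = monomial κ l := by
    rw [hQ, show (C l * (X 0 ^ k * X 1 ^ k * X 2 ^ k) : MvPolynomial (Fin 3) ℤ)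
      = C l * X 0 ^ k * X 1 ^ k * X 2 ^ k by ring, xi_mono3, hκ]
  have key : P - Q ∈ I := by
    rw [hI]
    refine xi_mem_span_of_support k _ fun d hd => ?_
    rw [mem_support_iff, coeff_sub] at hd
    have hQc : coeff d Q = if κ = d then l else 0 := by rw [hQmono, coeff_monomial]
    by_cases hdκ : d = κ
    · exfalso
      apply hd
      rw [hQc, if_pos hdκ.symm, hdκ, hκ, hP, xi_coeff_main k, ← hl, sub_self]
    · rw [hQc, if_neg (fun h => hdκ h.symm), sub_zero] at hd
      have hdeg : d 0 + d 1 + d 2 = 3 * k := by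
        rw [← xi_deg_sum]
        exact xi_hom3 k hd
      by_contra hcon
      push_neg at hcon
      have h0 := hcon 0
      have h1 := hcon 1
      have h2 := hcon 2
      apply hdκ
      have e0 : d 0 = k := by omega
      have e1 : d 1 = k := by omega
      have e2 : d 2 = k := by omega
      ext i
      fin_cases i <;> simp [hκ, Finsupp.single_apply, e0, e1, e2]
  have hmk : Ideal.Quotient.mk I P = Ideal.Quotient.mk I Q := by
    rw [Ideal.Quotient.eq]
    exact key
  calc ((Ideal.Quotient.mk I (X 0) - Ideal.Quotient.mk I (X 1)) *
        (Ideal.Quotient.mk I (X 0) - Ideal.Quotient.mk I (X 2)) *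
        (Ideal.Quotient.mk I (X 1) - Ideal.Quotient.mk I (X 2))) ^ k
      = Ideal.Quotient.mk I P := by rw [hP]; simp only [map_pow, map_mul, map_sub]
    _ = Ideal.Quotient.mk I Q := hmk
    _ = (↑l : MvPolynomial (Fin 3) ℤ ⧸ I) *
          ((Ideal.Quotient.mk I (X 0)) ^ k * (Ideal.Quotient.mk I (X 1)) ^ k *
            (Ideal.Quotient.mk I (X 2)) ^ k) := by
        have hCl : (C l : MvPolynomial (Fin 3) ℤ) = (l : MvPolynomial (Fin 3) ℤ) := by simp
        rw [hQ, hCl, map_mul, map_intCast]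
        simp only [map_mul, map_pow]
end
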